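/- A connected graph G of order n with minimum degree δ = 3 satisfies rvc(G) ≤ 3n/4 − 2. -/

import Mathlib

set_option linter.unusedSectionVars false
set_option linter.unusedVariables false


open SimpleGraph

/-- A coloring `c` is a rainbow vertex-coloring witness with `k` colors: any two vertices are
joined by a path whose internal vertices have distinct colors, all among the first `k` colors. -/
def IsRainbowVColoring {V : Type*} (G : SimpleGraph V) (c : V → ℕ) (k : ℕ) : Prop :=
  ∀ u v : V, ∃ p : G.Walk u v, p.IsPath ∧ (p.support.tail.dropLast.map c).Nodup ∧
    ∀ w ∈ p.support.tail.dropLast, c w < k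

/-- The rainbow vertex-connection number. -/
noncomputable def rvc {V : Type*} (G : SimpleGraph V) : ℕ :=
  sInf {k : ℕ | ∃ c : V → ℕ, IsRainbowVColoring G c k}

namespace RVCAux

open Set

variable {V : Type*} [Fintype V] {G : SimpleGraph V}

noncomputable def dg (H : G.Subgraph) (v : V) : ℕ := (H.neighborSet v).ncard

def lvs (H : G.Subgraph) : Set V := {v | v ∈ H.verts ∧ dg H v = 1}

def frs (H : G.Subgraph) : Set V := {v | v ∈ lvs H ∧ ∃ z, z ∉ H.verts ∧ G.Adj v z}

noncomputable def phi (H : G.Subgraph) : ℤ :=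
  4 * ((lvs H).ncard : ℤ) - ((H.verts).ncard : ℤ) - ((frs H).ncard : ℤ)

lemma lvs_subset (H : G.Subgraph) : lvs H ⊆ H.verts := fun _ hv => hv.1

lemma frs_subset (H : G.Subgraph) : frs H ⊆ lvs H := fun _ hv => hv.1

lemma frs_of_univ {H : G.Subgraph} (h : H.verts = Set.univ) : frs H = ∅ := by
  ext v
  simp only [frs, Set.mem_setOf_eq, Set.mem_empty_iff_false, iff_false, not_and]
  rintro _ ⟨z, hz, _⟩
  exact hz (h ▸ Set.mem_univ z)

lemma frs_sub {H H' : G.Subgraph} (hv : H.verts ⊆ H'.verts) :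
    frs H' ⊆ (lvs H' \ lvs H) ∪ (frs H ∩ lvs H') := by
  rintro v ⟨hl, z, hz, hadj⟩
  by_cases hvl : v ∈ lvs H
  · exact Or.inr ⟨⟨hvl, z, fun hzz => hz (hv hzz), hadj⟩, hl⟩
  · exact Or.inl ⟨hl, hvl⟩

section Pend

variable (H : G.Subgraph) {x y : V} (hxy : G.Adj x y)

def pend : G.Subgraph := H ⊔ G.subgraphOfAdj hxy

variable {H}

lemma verts_pend (hx : x ∈ H.verts) : (pend H hxy).verts = insert y H.verts := by
  simp only [pend, Subgraph.verts_sup, subgraphOfAdj_verts]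
  ext v; simp only [Set.mem_union, Set.mem_insert_iff]
  constructor
  · rintro (h | (h | h)) <;> simp_all
  · rintro (h | h) <;> simp_all

lemma connected_pend (hx : x ∈ H.verts) (hc : H.Connected) : (pend H hxy).Connected :=
  Subgraph.connected_sup hc.preconnected (Subgraph.subgraphOfAdj_connected hxy).preconnected ⟨x, hx, by simp⟩

lemma not_mem_nb (hy : y ∉ H.verts) : y ∉ H.neighborSet x := fun h => hy (H.edge_vert h.symm)

lemma nb_pend_x (hy : y ∉ H.verts) :
    (pend H hxy).neighborSet x = insert y (H.neighborSet x) := by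
  simp only [pend, Subgraph.neighborSet_sup, neighborSet_fst_subgraphOfAdj]
  rw [Set.union_singleton]

lemma nb_pend_y (hy : y ∉ H.verts) : (pend H hxy).neighborSet y = {x} := by
  have h0 : H.neighborSet y = ∅ := by
    ext w; simp only [Subgraph.mem_neighborSet, Set.mem_empty_iff_false, iff_false]
    exact fun h => hy (H.edge_vert h)
  simp only [pend, Subgraph.neighborSet_sup, h0, Set.empty_union,
    neighborSet_snd_subgraphOfAdj]

lemma nb_pend_other {v : V} (hvx : v ≠ x) (hvy : v ≠ y) :
    (pend H hxy).neighborSet v = H.neighborSet v := by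
  simp only [pend, Subgraph.neighborSet_sup,
    neighborSet_subgraphOfAdj_of_ne_of_ne hxy hvx hvy, Set.union_empty]

lemma dg_pend_x (hy : y ∉ H.verts) : dg (pend H hxy) x = dg H x + 1 := by
  simp only [dg]
  rw [nb_pend_x hxy hy, Set.ncard_insert_of_notMem (not_mem_nb hy)]

lemma dg_pend_y (hy : y ∉ H.verts) : dg (pend H hxy) y = 1 := by
  rw [dg, nb_pend_y hxy hy, Set.ncard_singleton]

lemma dg_pend_other {v : V} (hvx : v ≠ x) (hvy : v ≠ y) :
    dg (pend H hxy) v = dg H v := by simp only [dg]; rw [nb_pend_other hxy hvx hvy]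

lemma lvs_pend_leaf (hx : x ∈ H.verts) (hy : y ∉ H.verts) (h1 : dg H x = 1) :
    lvs (pend H hxy) = insert y (lvs H \ {x}) := by
  have hxney : x ≠ y := fun h => hy (h ▸ hx)
  ext v
  by_cases hvy : v = y
  · subst hvy
    constructor
    · intro _; exact Set.mem_insert _ _
    · intro _
      exact ⟨verts_pend hxy hx ▸ Set.mem_insert _ _, dg_pend_y hxy hy⟩
  by_cases hvx : v = x
  · subst hvx
    constructor
    · rintro ⟨_, hd⟩
      rw [dg_pend_x hxy hy, h1] at hd
      omega
    · rintro (h | ⟨_, h⟩)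
      · exact absurd h hxney
      · exact absurd rfl h
  · constructor
    · rintro ⟨hv, hd⟩
      rw [dg_pend_other hxy hvx hvy] at hd
      rw [verts_pend hxy hx] at hv
      rcases hv with h | h
      · exact absurd h hvy
      · exact Or.inr ⟨⟨h, hd⟩, hvx⟩
    · rintro (h | ⟨⟨h, hd⟩, _⟩)
      · exact absurd h hvy
      · refine ⟨verts_pend hxy hx ▸ Set.mem_insert_of_mem _ h, ?_⟩
        rw [dg_pend_other hxy hvx hvy]
        exact hd

lemma lvs_pend_int (hx : x ∈ H.verts) (hy : y ∉ H.verts) (h2 : 2 ≤ dg H x) :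
    lvs (pend H hxy) = insert y (lvs H) := by
  have hxney : x ≠ y := fun h => hy (h ▸ hx)
  ext v
  by_cases hvy : v = y
  · subst hvy
    constructor
    · intro _; exact Set.mem_insert _ _
    · intro _
      exact ⟨verts_pend hxy hx ▸ Set.mem_insert _ _, dg_pend_y hxy hy⟩
  by_cases hvx : v = x
  · subst hvx
    constructor
    · rintro ⟨_, hd⟩
      rw [dg_pend_x hxy hy] at hd
      omega
    · rintro (h | ⟨_, h⟩)
      · exact absurd h hxney
      · omega
  · constructor
    · rintro ⟨hv, hd⟩
      rw [dg_pend_other hxy hvx hvy] at hd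
      rw [verts_pend hxy hx] at hv
      rcases hv with h | h
      · exact absurd h hvy
      · exact Or.inr ⟨h, hd⟩
    · rintro (h | ⟨h, hd⟩)
      · exact absurd h hvy
      · refine ⟨verts_pend hxy hx ▸ Set.mem_insert_of_mem _ h, ?_⟩
        rw [dg_pend_other hxy hvx hvy]
        exact hd

end Pend

section Ops

variable {H : G.Subgraph}

lemma opA (hc : H.Connected) {u z : V} (hu : u ∈ H.verts)
    (hz : z ∉ H.verts) (hadj : G.Adj u z) (h2 : 2 ≤ dg H u) :
    ∃ H' : G.Subgraph, H'.Connected ∧ H.verts ⊆ H'.verts ∧ ¬ (H'.verts ⊆ H.verts) ∧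
      phi H + 2 ≤ phi H' := by
  refine ⟨pend H hadj, connected_pend hadj hu hc, ?_, ?_, ?_⟩
  · rw [verts_pend hadj hu]; exact Set.subset_insert _ _
  · rw [verts_pend hadj hu]
    exact fun h => hz (h (Set.mem_insert _ _))
  · have hzl : z ∉ lvs H := fun h => hz (lvs_subset H h)
    have hl : (lvs (pend H hadj)).ncard = (lvs H).ncard + 1 := by
      rw [lvs_pend_int hadj hu hz h2, Set.ncard_insert_of_notMem hzl]
    have hn : ((pend H hadj).verts).ncard = (H.verts).ncard + 1 := by
      rw [verts_pend hadj hu, Set.ncard_insert_of_notMem hz]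
    have hf : (frs (pend H hadj)).ncard ≤ (frs H).ncard + 1 := by
      have hsub : frs (pend H hadj) ⊆ insert z (frs H) := by
        intro v hv
        rcases frs_sub (H := H) (H' := pend H hadj) (by rw [verts_pend hadj hu]; exact Set.subset_insert _ _) hv with h | h
        · rw [lvs_pend_int hadj hu hz h2] at h
          rcases h.1 with h1 | h1
          · exact h1 ▸ Set.mem_insert _ _
          · exact absurd h1 h.2
        · exact Set.mem_insert_of_mem _ h.1
      exact le_trans (Set.ncard_le_ncard hsub) (Set.ncard_insert_le _ _)
    simp only [phi, hl, hn]
    omega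

lemma opB (hc : H.Connected) {x y1 y2 : V} (hx : x ∈ lvs H)
    (hy1 : y1 ∉ H.verts) (hy2 : y2 ∉ H.verts) (hne : y1 ≠ y2)
    (ha1 : G.Adj x y1) (ha2 : G.Adj x y2) :
    ∃ H' : G.Subgraph, H'.Connected ∧ H.verts ⊆ H'.verts ∧ ¬ (H'.verts ⊆ H.verts) ∧
      phi H + 1 ≤ phi H' ∧
      (H'.verts = Set.univ → phi H + ((frs H).ncard : ℤ) + 2 ≤ phi H') := by
  have hxv : x ∈ H.verts := hx.1
  have hdx : dg H x = 1 := hx.2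
  set H1 := pend H ha1 with hH1
  have hv1 : H1.verts = insert y1 H.verts := verts_pend ha1 hxv
  have hxv1 : x ∈ H1.verts := by rw [hv1]; exact Set.mem_insert_of_mem _ hxv
  have hy2v1 : y2 ∉ H1.verts := by
    rw [hv1]; rintro (h | h); exact hne (h.symm) ; exact hy2 h
  set H2 := pend H1 ha2 with hH2
  have hv2 : H2.verts = insert y2 (insert y1 H.verts) := by
    rw [hH2, verts_pend ha2 hxv1, hv1]
  have hdx1 : dg H1 x = 2 := by rw [hH1, dg_pend_x ha1 hy1, hdx]
  have hl1 : lvs H1 = insert y1 (lvs H \ {x}) := lvs_pend_leaf ha1 hxv hy1 hdx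
  have hl2 : lvs H2 = insert y2 (insert y1 (lvs H \ {x})) := by
    rw [hH2, lvs_pend_int ha2 hxv1 hy2v1 (by omega), hl1]
  have hxfr : x ∈ frs H := ⟨hx, y1, hy1, ha1⟩
  have hy1l : y1 ∉ lvs H \ {x} := fun h => hy1 (lvs_subset H h.1)
  have hy2l : y2 ∉ insert y1 (lvs H \ {x}) := by
    rintro (h | h); exact hne h.symm; exact hy2 (lvs_subset H h.1)
  have hcard_l : (lvs H2).ncard = (lvs H \ {x}).ncard + 2 := by
    rw [hl2, Set.ncard_insert_of_notMem hy2l, Set.ncard_insert_of_notMem hy1l]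
  have hcard_l0 : (lvs H \ {x}).ncard + 1 = (lvs H).ncard :=
    Set.ncard_diff_singleton_add_one hx
  have hn2 : (H2.verts).ncard = (H.verts).ncard + 2 := by
    rw [hv2, Set.ncard_insert_of_notMem, Set.ncard_insert_of_notMem hy1]
    rintro (h | h); exact hne h.symm; exact hy2 h
  have hxl2 : x ∉ lvs H2 := by
    rw [hl2]
    have hxy1 : x ≠ y1 := fun h => hy1 (h ▸ hxv)
    have hxy2 : x ≠ y2 := fun h => hy2 (h ▸ hxv)
    rintro (h | h | h)
    exacts [hxy2 h, hxy1 h, h.2 rfl]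
  have hfsub : frs H2 ⊆ insert y2 (insert y1 (frs H \ {x})) := by
    intro v hv
    have hvsub : H.verts ⊆ H2.verts := by
      rw [hv2]; exact (Set.subset_insert _ _).trans ((Set.insert_subset_insert (Set.subset_insert _ _)).trans (by rfl))
    rcases frs_sub (H := H) (H' := H2) hvsub hv with h | h
    · rw [hl2] at h
      rcases h.1 with h1 | h1 | h1
      · exact h1 ▸ Set.mem_insert _ _
      · exact h1 ▸ Set.mem_insert_of_mem _ (Set.mem_insert _ _)
      · exact absurd h1.1 h.2
    · refine Set.mem_insert_of_mem _ (Set.mem_insert_of_mem _ ⟨h.1, ?_⟩)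
      intro hvx
      exact hxl2 ((Set.mem_singleton_iff.1 hvx) ▸ h.2)
  have hfr0 : (frs H \ {x}).ncard + 1 = (frs H).ncard :=
    Set.ncard_diff_singleton_add_one hxfr
  have hf2 : (frs H2).ncard ≤ (frs H \ {x}).ncard + 2 :=
    le_trans (Set.ncard_le_ncard hfsub)
      (le_trans (Set.ncard_insert_le _ _) (by
        have := Set.ncard_insert_le y1 (frs H \ {x}); omega))
  refine ⟨H2, ?_, ?_, ?_, ?_, ?_⟩
  · exact connected_pend ha2 hxv1 (connected_pend ha1 hxv hc)
  · rw [hv2]; intro a ha; exact Set.mem_insert_of_mem _ (Set.mem_insert_of_mem _ ha)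
  · rw [hv2]; exact fun h => hy2 (h (Set.mem_insert _ _))
  · simp only [phi, hcard_l, hn2]; omega
  · intro hu
    have : frs H2 = ∅ := frs_of_univ hu
    simp only [phi, hcard_l, hn2, this, Set.ncard_empty, Nat.cast_zero]
    omega

lemma opC (hc : H.Connected) {x y z1 z2 : V} (hx : x ∈ lvs H)
    (hy : y ∉ H.verts) (hxy : G.Adj x y)
    (hz1 : z1 ∉ H.verts) (hz2 : z2 ∉ H.verts) (hz1y : z1 ≠ y) (hz2y : z2 ≠ y)
    (hzne : z1 ≠ z2) (ha1 : G.Adj y z1) (ha2 : G.Adj y z2) :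
    ∃ H' : G.Subgraph, H'.Connected ∧ H.verts ⊆ H'.verts ∧ ¬ (H'.verts ⊆ H.verts) ∧
      phi H ≤ phi H' ∧
      (H'.verts = Set.univ → phi H + 2 ≤ phi H') := by
  have hxv : x ∈ H.verts := hx.1
  have hdx : dg H x = 1 := hx.2
  have hxfr : x ∈ frs H := ⟨hx, y, hy, hxy⟩
  set H1 := pend H hxy with hH1
  have hv1 : H1.verts = insert y H.verts := verts_pend hxy hxv
  have hyv1 : y ∈ H1.verts := by rw [hv1]; exact Set.mem_insert _ _
  have hz1v1 : z1 ∉ H1.verts := by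
    rw [hv1]; rintro (h | h); exact hz1y h; exact hz1 h
  set H2 := pend H1 ha1 with hH2
  have hv2 : H2.verts = insert z1 (insert y H.verts) := by
    rw [hH2, verts_pend ha1 hyv1, hv1]
  have hyv2 : y ∈ H2.verts := by rw [hv2]; exact Set.mem_insert_of_mem _ (Set.mem_insert _ _)
  have hz2v2 : z2 ∉ H2.verts := by
    rw [hv2]; rintro (h | h | h)
    exacts [hzne.symm h, hz2y h, hz2 h]
  set H3 := pend H2 ha2 with hH3
  have hv3 : H3.verts = insert z2 (insert z1 (insert y H.verts)) := by
    rw [hH3, verts_pend ha2 hyv2, hv2]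
  have hd1y : dg H1 y = 1 := dg_pend_y hxy hy
  have hd2y : dg H2 y = 2 := by rw [hH2, dg_pend_x ha1 hz1v1, hd1y]
  have hl1 : lvs H1 = insert y (lvs H \ {x}) := lvs_pend_leaf hxy hxv hy hdx
  have hynl : y ∉ lvs H \ {x} := fun h => hy (lvs_subset H h.1)
  have hl2 : lvs H2 = insert z1 (lvs H \ {x}) := by
    rw [hH2, lvs_pend_leaf ha1 hyv1 hz1v1 hd1y, hl1,
      Set.insert_diff_self_of_notMem hynl]
  have hl3 : lvs H3 = insert z2 (insert z1 (lvs H \ {x})) := by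
    rw [hH3, lvs_pend_int ha2 hyv2 hz2v2 (by omega), hl2]
  have hz1nl : z1 ∉ lvs H \ {x} := fun h => hz1 (lvs_subset H h.1)
  have hz2nl : z2 ∉ insert z1 (lvs H \ {x}) := by
    rintro (h | h); exact hzne.symm h; exact hz2 (lvs_subset H h.1)
  have hcard_l : (lvs H3).ncard = (lvs H \ {x}).ncard + 2 := by
    rw [hl3, Set.ncard_insert_of_notMem hz2nl, Set.ncard_insert_of_notMem hz1nl]
  have hcard_l0 : (lvs H \ {x}).ncard + 1 = (lvs H).ncard :=
    Set.ncard_diff_singleton_add_one hx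
  have hn3 : (H3.verts).ncard = (H.verts).ncard + 3 := by
    rw [hv3, Set.ncard_insert_of_notMem, Set.ncard_insert_of_notMem,
      Set.ncard_insert_of_notMem hy]
    · rintro (h | h); exact hz1y h; exact hz1 h
    · rintro (h | h | h)
      exacts [hzne.symm h, hz2y h, hz2 h]
  have hxl3 : x ∉ lvs H3 := by
    have hxy1 : x ≠ y := fun h => hy (h ▸ hxv)
    have hxz1 : x ≠ z1 := fun h => hz1 (h ▸ hxv)
    have hxz2 : x ≠ z2 := fun h => hz2 (h ▸ hxv)
    rw [hl3]
    rintro (h | h | h)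
    exacts [hxz2 h, hxz1 h, h.2 rfl]
  have hfsub : frs H3 ⊆ insert z2 (insert z1 (frs H \ {x})) := by
    intro v hv
    have hvsub : H.verts ⊆ H3.verts := by
      rw [hv3]; intro a ha
      exact Set.mem_insert_of_mem _ (Set.mem_insert_of_mem _ (Set.mem_insert_of_mem _ ha))
    rcases frs_sub (H := H) (H' := H3) hvsub hv with h | h
    · rw [hl3] at h
      rcases h.1 with h1 | h1 | h1
      · exact h1 ▸ Set.mem_insert _ _
      · exact h1 ▸ Set.mem_insert_of_mem _ (Set.mem_insert _ _)
      · exact absurd h1.1 h.2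
    · refine Set.mem_insert_of_mem _ (Set.mem_insert_of_mem _ ⟨h.1, ?_⟩)
      intro hvx
      exact hxl3 ((Set.mem_singleton_iff.1 hvx) ▸ h.2)
  have hfr0 : (frs H \ {x}).ncard + 1 = (frs H).ncard :=
    Set.ncard_diff_singleton_add_one hxfr
  have hf3 : (frs H3).ncard ≤ (frs H \ {x}).ncard + 2 :=
    le_trans (Set.ncard_le_ncard hfsub)
      (le_trans (Set.ncard_insert_le _ _) (by
        have := Set.ncard_insert_le z1 (frs H \ {x}); omega))
  refine ⟨H3, ?_, ?_, ?_, ?_, ?_⟩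
  · exact connected_pend ha2 hyv2 (connected_pend ha1 hyv1 (connected_pend hxy hxv hc))
  · rw [hv3]; intro a ha
    exact Set.mem_insert_of_mem _ (Set.mem_insert_of_mem _ (Set.mem_insert_of_mem _ ha))
  · rw [hv3]; exact fun h => hz2 (h (Set.mem_insert _ _))
  · simp only [phi, hcard_l, hn3]; omega
  · intro hu
    have hfe : frs H3 = ∅ := frs_of_univ hu
    have hfge : 1 ≤ (frs H).ncard := (Set.ncard_pos (Set.toFinite _)).2 ⟨x, hxfr⟩
    simp only [phi, hcard_l, hn3, hfe, Set.ncard_empty, Nat.cast_zero]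
    omega

lemma opD (hc : H.Connected) {x y w : V} (hx : x ∈ lvs H)
    (hy : y ∉ H.verts) (hxy : G.Adj x y)
    (hw : w ∈ lvs H) (hwy : G.Adj w y) (hwx : w ≠ x)
    (hwout : ∀ z, z ∉ H.verts → G.Adj w z → z = y)
    (hAy : ∀ a, a ∈ H.verts → G.Adj a y → dg H a = 1)
    (hδ : ∀ v : V, 3 ≤ (G.neighborSet v).ncard) :
    ∃ H' : G.Subgraph, H'.Connected ∧ H.verts ⊆ H'.verts ∧ ¬ (H'.verts ⊆ H.verts) ∧
      phi H ≤ phi H' ∧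
      (H'.verts = Set.univ → phi H + 2 ≤ phi H') := by
  have hxv : x ∈ H.verts := hx.1
  have hdx : dg H x = 1 := hx.2
  have hxfr : x ∈ frs H := ⟨hx, y, hy, hxy⟩
  have hwfr : w ∈ frs H := ⟨hw, y, hy, hwy⟩
  set H1 := pend H hxy with hH1
  have hv1 : H1.verts = insert y H.verts := verts_pend hxy hxv
  have hl1 : lvs H1 = insert y (lvs H \ {x}) := lvs_pend_leaf hxy hxv hy hdx
  have hynl : y ∉ lvs H \ {x} := fun h => hy (lvs_subset H h.1)
  have hcard_l : (lvs H1).ncard = (lvs H \ {x}).ncard + 1 := by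
    rw [hl1, Set.ncard_insert_of_notMem hynl]
  have hcard_l0 : (lvs H \ {x}).ncard + 1 = (lvs H).ncard :=
    Set.ncard_diff_singleton_add_one hx
  have hn1 : (H1.verts).ncard = (H.verts).ncard + 1 := by
    rw [hv1, Set.ncard_insert_of_notMem hy]
  have hxl1 : x ∉ lvs H1 := by
    have hxy1 : x ≠ y := fun h => hy (h ▸ hxv)
    rw [hl1]
    rintro (h | h)
    exacts [hxy1 h, h.2 rfl]
  have hwfl1 : w ∉ frs H1 := by
    rintro ⟨hwl, z, hzv, hadjz⟩
    rw [hv1] at hzv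
    have hzy : z ≠ y := fun h => hzv (h ▸ Set.mem_insert _ _)
    exact hzy (hwout z (fun h => hzv (Set.mem_insert_of_mem _ h)) hadjz)
  have hfsub : frs H1 ⊆ insert y ((frs H \ {x}) \ {w}) := by
    intro v hv
    rcases frs_sub (H := H) (H' := H1) (by rw [hv1]; exact Set.subset_insert _ _) hv with h | h
    · rw [hl1] at h
      rcases h.1 with h1 | h1
      · exact h1 ▸ Set.mem_insert _ _
      · exact absurd h1.1 h.2
    · refine Set.mem_insert_of_mem _ ⟨⟨h.1, ?_⟩, ?_⟩
      · intro hvx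
        exact hxl1 ((Set.mem_singleton_iff.1 hvx) ▸ h.2)
      · intro hvw
        rw [Set.mem_singleton_iff] at hvw
        subst hvw
        exact hwfl1 hv
  have hwin : w ∈ frs H \ {x} := ⟨hwfr, hwx⟩
  have hfr0 : (frs H \ {x}).ncard + 1 = (frs H).ncard :=
    Set.ncard_diff_singleton_add_one hxfr
  have hfr1 : ((frs H \ {x}) \ {w}).ncard + 1 = (frs H \ {x}).ncard :=
    Set.ncard_diff_singleton_add_one hwin
  have hf1 : (frs H1).ncard ≤ ((frs H \ {x}) \ {w}).ncard + 1 :=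
    le_trans (Set.ncard_le_ncard hfsub) (Set.ncard_insert_le _ _)
  refine ⟨H1, connected_pend hxy hxv hc, ?_, ?_, ?_, ?_⟩
  · rw [hv1]; exact Set.subset_insert _ _
  · rw [hv1]; exact fun h => hy (h (Set.mem_insert _ _))
  · simp only [phi, hcard_l, hn1]; omega
  · intro hu
    have hfe : frs H1 = ∅ := frs_of_univ hu
    have hNy : G.neighborSet y ⊆ frs H := by
      intro a ha
      have hay : G.Adj y a := ha
      have haney : a ≠ y := fun h => (G.irrefl (h ▸ hay))
      have hav : a ∈ H.verts := by
        have : a ∈ H1.verts := hu ▸ Set.mem_univ a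
        rw [hv1] at this
        rcases this with h | h
        · exact absurd h haney
        · exact h
      have hda : dg H a = 1 := hAy a hav hay.symm
      exact ⟨⟨hav, hda⟩, y, hy, hay.symm⟩
    have hf3 : 3 ≤ (frs H).ncard :=
      le_trans (hδ y) (Set.ncard_le_ncard hNy)
    simp only [phi, hcard_l, hn1, hfe, Set.ncard_empty, Nat.cast_zero]
    omega

end Ops


section Grow

lemma exists_boundary_aux {S : Set V} :
    ∀ {a b : V} (_ : G.Walk a b), a ∈ S → b ∉ S → ∃ u z, u ∈ S ∧ z ∉ S ∧ G.Adj u z := by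
  intro a b p
  induction p with
  | nil => intro ha hb; exact absurd ha hb
  | @cons u v w h q ih =>
    intro ha hb
    by_cases h2 : v ∈ S
    · exact ih h2 hb
    · exact ⟨u, v, ha, h2, h⟩

lemma exists_boundary (hGc : G.Connected) {H : G.Subgraph}
    (hne : H.verts.Nonempty) (hnu : H.verts ≠ Set.univ) :
    ∃ u z, u ∈ H.verts ∧ z ∉ H.verts ∧ G.Adj u z := by
  obtain ⟨s, hs⟩ := hne
  have : ∃ v, v ∉ H.verts := by
    by_contra hcon
    push_neg at hcon
    exact hnu (Set.eq_univ_iff_forall.2 hcon)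
  obtain ⟨v, hv⟩ := this
  obtain ⟨p⟩ := hGc.preconnected s v
  exact exists_boundary_aux p hs hv

lemma one_le_dg {H : G.Subgraph} (hc : H.Connected) (h2 : 2 ≤ H.verts.ncard)
    {v : V} (hv : v ∈ H.verts) : 1 ≤ dg H v := by
  obtain ⟨u, hu, hune⟩ := Set.exists_ne_of_one_lt_ncard (s := H.verts) (by omega) v
  obtain ⟨p⟩ := hc.preconnected ⟨v, hv⟩ ⟨u, hu⟩
  have hnn : ¬ p.Nil := by
    apply Walk.not_nil_of_ne
    intro hcon
    exact hune (congrArg Subtype.val hcon).symm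
  have h := p.adj_snd hnn
  exact (Set.ncard_pos (Set.toFinite _)).2 ⟨(p.getVert 1).val, h⟩

lemma grow (hGc : G.Connected) (hδ : ∀ v : V, 3 ≤ (G.neighborSet v).ncard) :
    ∀ (k : ℕ) (H : G.Subgraph), (Set.univ \ H.verts).ncard ≤ k → H.Connected →
      2 ≤ H.verts.ncard → H.verts ≠ Set.univ →
      ∃ H' : G.Subgraph, H'.Connected ∧ H'.verts = Set.univ ∧ phi H + 2 ≤ phi H' := by
  intro k
  induction k with
  | zero =>
    intro H hk _ _ hnu
    exfalso
    apply hnu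
    have h0 : (Set.univ \ H.verts).ncard = 0 := by omega
    rw [Set.ncard_eq_zero (Set.toFinite _), Set.diff_eq_empty] at h0
    exact Set.eq_univ_of_univ_subset h0
  | succ k ih =>
    intro H hk hc h2 hnu
    have hstep : ∃ H' : G.Subgraph, H'.Connected ∧ H.verts ⊆ H'.verts ∧
        ¬ (H'.verts ⊆ H.verts) ∧ phi H ≤ phi H' ∧
        (H'.verts = Set.univ → phi H + 2 ≤ phi H') := by
      by_cases hA : ∃ u z, u ∈ H.verts ∧ z ∉ H.verts ∧ G.Adj u z ∧ 2 ≤ dg H u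
      · obtain ⟨u, z, hu, hz, hadj, hd⟩ := hA
        obtain ⟨H', hc', hs', hns', hphi⟩ := opA hc hu hz hadj hd
        exact ⟨H', hc', hs', hns', by omega, fun _ => hphi⟩
      push_neg at hA
      by_cases hB : ∃ x y1 y2, x ∈ lvs H ∧ y1 ∉ H.verts ∧ y2 ∉ H.verts ∧ y1 ≠ y2 ∧
          G.Adj x y1 ∧ G.Adj x y2
      · obtain ⟨x, y1, y2, hx, hy1, hy2, hne, ha1, ha2⟩ := hB
        obtain ⟨H', hc', hs', hns', hphi, hphi2⟩ := opB hc hx hy1 hy2 hne ha1 ha2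
        refine ⟨H', hc', hs', hns', by omega, fun hu => ?_⟩
        have := hphi2 hu
        have h0 : (0:ℤ) ≤ ((frs H).ncard : ℤ) := Int.natCast_nonneg _
        omega
      push_neg at hB
      have hvne : H.verts.Nonempty := by
        rw [← Set.ncard_pos (Set.toFinite _)]; omega
      obtain ⟨x, y, hxv, hy, hadj⟩ := exists_boundary hGc hvne hnu
      have hdx1 : dg H x = 1 := by
        have hge := one_le_dg hc h2 hxv
        have hlt := hA x y hxv hy hadj
        omega
      have hxl : x ∈ lvs H := ⟨hxv, hdx1⟩
      by_cases hC : ∃ z1 z2, z1 ≠ z2 ∧ z1 ∉ H.verts ∧ z2 ∉ H.verts ∧ z1 ≠ y ∧ z2 ≠ y ∧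
          G.Adj y z1 ∧ G.Adj y z2
      · obtain ⟨z1, z2, hzne, hz1, hz2, hz1y, hz2y, ha1, ha2⟩ := hC
        exact opC hc hxl hy hadj hz1 hz2 hz1y hz2y hzne ha1 ha2
      push_neg at hC
      -- case D : find w
      have hBcard : (G.neighborSet y \ insert y H.verts).ncard ≤ 1 := by
        rw [Set.ncard_le_one (Set.toFinite _)]
        rintro a ⟨haa, han⟩ b ⟨hba, hbn⟩
        simp only [Set.mem_insert_iff, not_or] at han hbn
        by_contra hab
        exact hC a b hab han.2 hbn.2 han.1 hbn.1 haa hba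
      have hNsub : G.neighborSet y ⊆
          (G.neighborSet y ∩ H.verts) ∪ (G.neighborSet y \ insert y H.verts) := by
        intro a ha
        by_cases hav : a ∈ H.verts
        · exact Or.inl ⟨ha, hav⟩
        · refine Or.inr ⟨ha, ?_⟩
          rintro (h | h)
          · exact G.irrefl (h ▸ ha)
          · exact hav h
      have hAcard : 2 ≤ (G.neighborSet y ∩ H.verts).ncard := by
        have h3 := hδ y
        have hle := Set.ncard_le_ncard hNsub (Set.toFinite _)
        have hun := Set.ncard_union_le (G.neighborSet y ∩ H.verts)
          (G.neighborSet y \ insert y H.verts)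
        omega
      obtain ⟨w, hwmem, hwx⟩ := Set.exists_ne_of_one_lt_ncard (s := G.neighborSet y ∩ H.verts) (by omega) x
      have hwv : w ∈ H.verts := hwmem.2
      have hywadj : G.Adj y w := hwmem.1
      have hwy : G.Adj w y := hywadj.symm
      have hdw1 : dg H w = 1 := by
        have hge := one_le_dg hc h2 hwv
        have hlt := hA w y hwv hy hwy
        omega
      have hwl : w ∈ lvs H := ⟨hwv, hdw1⟩
      have hwout : ∀ z, z ∉ H.verts → G.Adj w z → z = y := by
        intro z hz hadjz
        by_contra hzy
        exact hB w z y hwl hz hy hzy hadjz hwy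
      have hAy : ∀ a, a ∈ H.verts → G.Adj a y → dg H a = 1 := by
        intro a hav haadj
        have hge := one_le_dg hc h2 hav
        have hlt := hA a y hav hy haadj
        omega
      exact opD hc hxl hy hadj hwl hwy hwx hwout hAy hδ
    obtain ⟨H', hc', hs', hns', hphi, hphi2⟩ := hstep
    by_cases hu : H'.verts = Set.univ
    · exact ⟨H', hc', hu, hphi2 hu⟩
    · have hc2 : 2 ≤ H'.verts.ncard := le_trans h2 (Set.ncard_le_ncard hs' (Set.toFinite _))
      obtain ⟨a, haH', haH⟩ := Set.not_subset.1 hns'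
      have hssub : (Set.univ \ H'.verts) ⊂ (Set.univ \ H.verts) :=
        ⟨Set.diff_subset_diff_right hs',
         fun hsub => (hsub ⟨Set.mem_univ a, haH⟩).2 haH'⟩
      have hmeas : (Set.univ \ H'.verts).ncard ≤ k := by
        have := Set.ncard_lt_ncard hssub (Set.toFinite _)
        omega
      obtain ⟨H'', hc'', hu'', hphi''⟩ := ih H' hmeas hc' hc2 hu
      exact ⟨H'', hc'', hu'', by omega⟩

end Grow

section Star

variable (G)

def star (v : V) : G.Subgraph where
  verts := insert v (G.neighborSet v)
  Adj a b := (a = v ∧ G.Adj v b) ∨ (b = v ∧ G.Adj v a)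
  adj_sub := by
    rintro a b (⟨rfl, h⟩ | ⟨rfl, h⟩)
    · exact h
    · exact h.symm
  edge_vert := by
    rintro a b (⟨rfl, h⟩ | ⟨rfl, h⟩)
    · exact Set.mem_insert _ _
    · exact Set.mem_insert_of_mem _ h
  symm := by
    constructor
    rintro a b (⟨rfl, h⟩ | ⟨rfl, h⟩)
    · exact Or.inr ⟨rfl, h⟩
    · exact Or.inl ⟨rfl, h⟩

variable {G}

lemma star_verts (v : V) : (star G v).verts = insert v (G.neighborSet v) := rfl

lemma nb_star_center (v : V) : (star G v).neighborSet v = G.neighborSet v := by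
  ext w
  constructor
  · rintro (⟨_, h⟩ | ⟨rfl, h⟩) <;> exact h
  · intro h
    exact Or.inl ⟨rfl, h⟩

lemma nb_star_leaf {v x : V} (hx : G.Adj v x) : (star G v).neighborSet x = {v} := by
  ext w
  constructor
  · rintro (⟨h, _⟩ | ⟨rfl, _⟩)
    · exact absurd h hx.ne'
    · rfl
  · rintro rfl
    exact Or.inr ⟨rfl, hx⟩

lemma dg_star_center (v : V) : dg (star G v) v = (G.neighborSet v).ncard := by
  simp only [dg]; rw [nb_star_center]

lemma dg_star_leaf {v x : V} (hx : G.Adj v x) : dg (star G v) x = 1 := by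
  simp only [dg]; rw [nb_star_leaf hx, Set.ncard_singleton]

lemma star_connected (v : V) : (star G v).Connected := by
  rw [Subgraph.connected_iff]
  constructor
  · have hre : ∀ a : (star G v).verts,
        (star G v).coe.Reachable a ⟨v, Set.mem_insert _ _⟩ := by
      rintro ⟨a, ha⟩
      by_cases hav : a = v
      · subst hav
        exact Reachable.refl _
      · have haN : a ∈ G.neighborSet v := by
          rcases ha with h | h
          · exact absurd h hav
          · exact h
        have : (star G v).coe.Adj ⟨a, ha⟩ ⟨v, Set.mem_insert _ _⟩ :=
          Or.inr ⟨rfl, haN⟩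
        exact this.reachable
    exact ⟨fun a b => (hre a).trans (hre b).symm⟩
  · exact ⟨v, Set.mem_insert _ _⟩

lemma lvs_star {v : V} (h3 : 3 ≤ (G.neighborSet v).ncard) :
    lvs (star G v) = G.neighborSet v := by
  ext a
  by_cases hav : a = v
  · subst hav
    simp only [lvs, Set.mem_setOf_eq, dg_star_center, mem_neighborSet]
    constructor
    · rintro ⟨_, h⟩; omega
    · intro h; exact absurd h (G.irrefl)
  · constructor
    · rintro ⟨ha, _⟩
      rcases ha with h | h
      · exact absurd h hav
      · exact h
    · intro h
      exact ⟨Set.mem_insert_of_mem _ h, dg_star_leaf h⟩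

lemma star_verts_ncard (v : V) :
    (star G v).verts.ncard = (G.neighborSet v).ncard + 1 :=
  Set.ncard_insert_of_notMem (fun h => G.irrefl h) (Set.toFinite _)

end Star

theorem main_leaves (hGc : G.Connected) (hδ : ∀ v : V, 3 ≤ (G.neighborSet v).ncard) :
    ∃ H : G.Subgraph, H.Connected ∧ H.verts = Set.univ ∧
      (Fintype.card V : ℤ) + 8 ≤ 4 * ((lvs H).ncard : ℤ) := by
  have hnV : Nonempty V := hGc.nonempty
  obtain ⟨v, -, hmax⟩ := Finset.exists_max_image Finset.univ
    (fun u => (G.neighborSet u).ncard) ⟨Classical.arbitrary V, Finset.mem_univ _⟩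
  have hmax' : ∀ u : V, (G.neighborSet u).ncard ≤ (G.neighborSet v).ncard :=
    fun u => hmax u (Finset.mem_univ u)
  set k := (G.neighborSet v).ncard with hk
  have hk3 : 3 ≤ k := hδ v
  set H0 := star G v with hH0
  have hl0 : (lvs H0).ncard = k := by rw [hH0, lvs_star hk3]
  have hn0 : H0.verts.ncard = k + 1 := star_verts_ncard v
  have hf0 : (frs H0).ncard ≤ k := by
    have := Set.ncard_le_ncard (frs_subset H0) (Set.toFinite _)
    omega
  have hcV : ∀ (H : G.Subgraph), H.verts = Set.univ →
      H.verts.ncard = Fintype.card V := by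
    intro H h
    rw [h, Set.ncard_univ, Nat.card_eq_fintype_card]
  -- final assembly from a spanning subgraph with phi ≥ 8
  have hconv : ∀ (H : G.Subgraph), H.Connected → H.verts = Set.univ →
      (8 : ℤ) ≤ phi H →
      ∃ H : G.Subgraph, H.Connected ∧ H.verts = Set.univ ∧
        (Fintype.card V : ℤ) + 8 ≤ 4 * ((lvs H).ncard : ℤ) := by
    intro H hc hu hphi
    refine ⟨H, hc, hu, ?_⟩
    rw [phi, frs_of_univ hu, Set.ncard_empty, hcV H hu] at hphi
    push_cast at hphi ⊢
    omega
  by_cases hu0 : H0.verts = Set.univ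
  · apply hconv H0 (star_connected v) hu0
    rw [phi, frs_of_univ hu0, Set.ncard_empty, hl0, hn0]
    push_cast
    omega
  have h20 : 2 ≤ H0.verts.ncard := by omega
  have hmeas : (Set.univ \ H0.verts).ncard ≤ Fintype.card V := by
    have := Set.ncard_le_ncard (Set.diff_subset (s := Set.univ) (t := H0.verts)) (Set.toFinite _)
    rw [Set.ncard_univ, Nat.card_eq_fintype_card] at this
    exact this
  have hgrow6 : (6 : ℤ) ≤ phi H0 →
      ∃ H : G.Subgraph, H.Connected ∧ H.verts = Set.univ ∧
        (Fintype.card V : ℤ) + 8 ≤ 4 * ((lvs H).ncard : ℤ) := by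
    intro h6
    obtain ⟨H', hc', hu', hphi'⟩ :=
      grow hGc hδ (Fintype.card V) H0 hmeas (star_connected v) h20 hu0
    exact hconv H' hc' hu' (by omega)
  by_cases hk4 : 4 ≤ k
  · apply hgrow6
    rw [phi, hl0, hn0]
    push_cast
    omega
  have hkeq : k = 3 := by omega
  by_cases hf2 : (frs H0).ncard ≤ 2
  · apply hgrow6
    rw [phi, hl0, hn0]
    push_cast
    omega
  -- f0 = 3 : all leaves free
  push_neg at hf2
  have hf3 : (frs H0).ncard = 3 := by omega
  have hfrs_eq : frs H0 = lvs H0 := by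
    apply Set.eq_of_subset_of_ncard_le (frs_subset H0) _ (Set.toFinite _)
    omega
  by_cases hBop : ∃ x y1 y2, x ∈ lvs H0 ∧ y1 ∉ H0.verts ∧ y2 ∉ H0.verts ∧ y1 ≠ y2 ∧
      G.Adj x y1 ∧ G.Adj x y2
  · obtain ⟨x, y1, y2, hx, hy1, hy2, hne, ha1, ha2⟩ := hBop
    obtain ⟨H1, hc1, hs1, hns1, hphi1, hphi1u⟩ :=
      opB (star_connected v) hx hy1 hy2 hne ha1 ha2
    have hphi0 : phi H0 = 5 := by
      rw [phi, hl0, hn0, hf3, hkeq]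
      norm_num
    by_cases hu1 : H1.verts = Set.univ
    · apply hconv H1 hc1 hu1
      have := hphi1u hu1
      rw [hphi0, hf3] at this
      omega
    · have h21 : 2 ≤ H1.verts.ncard :=
        le_trans h20 (Set.ncard_le_ncard hs1 (Set.toFinite _))
      have hmeas1 : (Set.univ \ H1.verts).ncard ≤ Fintype.card V := by
        have := Set.ncard_le_ncard (Set.diff_subset (s := Set.univ) (t := H1.verts))
          (Set.toFinite _)
        rw [Set.ncard_univ, Nat.card_eq_fintype_card] at this
        exact this
      obtain ⟨H', hc', hu', hphi'⟩ :=
        grow hGc hδ (Fintype.card V) H1 hmeas1 hc1 h21 hu1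
      apply hconv H' hc' hu'
      rw [hphi0] at hphi1
      omega
  -- no B-op : contradiction
  exfalso
  push_neg at hBop
  have hlvs0 : lvs H0 = G.neighborSet v := lvs_star hk3
  have hnb : ∀ x, x ∈ G.neighborSet v → ∃ a, a ∈ G.neighborSet v ∧ a ≠ x ∧ G.Adj x a := by
    intro x hx
    by_contra hcon
    push_neg at hcon
    have hxl : x ∈ lvs H0 := hlvs0 ▸ hx
    have hvNx : v ∈ G.neighborSet x := (hx : G.Adj v x).symm
    have hNx3 : (G.neighborSet x).ncard = 3 := le_antisymm (hkeq ▸ hmax' x) (hδ x)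
    have hsub : G.neighborSet x \ {v} ⊆ (Set.univ \ H0.verts) := by
      rintro a ⟨haN, hav⟩
      rw [Set.mem_singleton_iff] at hav
      refine ⟨Set.mem_univ _, ?_⟩
      rintro (h | h)
      · exact hav h
      · have hax : a ≠ x := fun h' => G.irrefl (h' ▸ haN)
        exact hcon a h hax haN
    have hc2 : 1 < (G.neighborSet x \ {v}).ncard := by
      have := Set.ncard_diff_singleton_add_one hvNx (Set.toFinite _)
      omega
    obtain ⟨y1, hy1, y2, hy2, hyne⟩ := (Set.one_lt_ncard (Set.toFinite _)).1 hc2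
    have hy1o := hsub hy1
    have hy2o := hsub hy2
    exact hBop x y1 y2 hxl hy1o.2 hy2o.2 hyne hy1.1 hy2.1
  have hN3 : (G.neighborSet v).ncard = 3 := by rw [← hk]; exact hkeq
  obtain ⟨x1, x2, x3, h12, h13, h23, hNv⟩ := Set.ncard_eq_three.1 hN3
  have hm1 : x1 ∈ G.neighborSet v := by rw [hNv]; exact Set.mem_insert _ _
  have hm2 : x2 ∈ G.neighborSet v := by
    rw [hNv]; exact Set.mem_insert_of_mem _ (Set.mem_insert _ _)
  have hm3 : x3 ∈ G.neighborSet v := by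
    rw [hNv]; exact Set.mem_insert_of_mem _ (Set.mem_insert_of_mem _ rfl)
  have hdead : ∀ a b c : V, a ∈ G.neighborSet v → b ∈ G.neighborSet v →
      c ∈ G.neighborSet v → b ≠ c → G.Adj a b → G.Adj a c → False := by
    intro a b c haN hbN hcN hbc hadjb hadjc
    have haf : a ∈ frs H0 := by
      rw [hfrs_eq, hlvs0]; exact haN
    obtain ⟨-, z, hz, hadjz⟩ := haf
    have hNa3 : (G.neighborSet a).ncard = 3 := le_antisymm (hkeq ▸ hmax' a) (hδ a)
    have hsub : ({v, b, c} : Set V) ⊆ G.neighborSet a := by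
      intro t ht
      simp only [Set.mem_insert_iff, Set.mem_singleton_iff] at ht
      rcases ht with rfl | rfl | rfl
      · exact (haN : G.Adj t a).symm
      · exact hadjb
      · exact hadjc
    have hvb : v ≠ b := fun h => G.irrefl (h ▸ (hbN : G.Adj v b))
    have hvc : v ≠ c := fun h => G.irrefl (h ▸ (hcN : G.Adj v c))
    have hcard : ({v, b, c} : Set V).ncard = 3 := by
      rw [Set.ncard_insert_of_notMem (by
          simp only [Set.mem_insert_iff, Set.mem_singleton_iff]
          rintro (h | h)
          exacts [hvb h, hvc h]),
        Set.ncard_insert_of_notMem (by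
          simp only [Set.mem_singleton_iff]
          exact hbc),
        Set.ncard_singleton]
    have heq : ({v, b, c} : Set V) = G.neighborSet a :=
      Set.eq_of_subset_of_ncard_le hsub (by omega) (Set.toFinite _)
    have hzmem : z ∈ ({v, b, c} : Set V) := by rw [heq]; exact hadjz
    apply hz
    simp only [Set.mem_insert_iff, Set.mem_singleton_iff] at hzmem
    rcases hzmem with rfl | rfl | rfl
    · exact Set.mem_insert _ _
    · exact Set.mem_insert_of_mem _ hbN
    · exact Set.mem_insert_of_mem _ hcN
  obtain ⟨a, haN, hax1, hadj1⟩ := hnb x1 hm1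
  have ha' : a = x2 ∨ a = x3 := by
    rw [hNv] at haN
    simp only [Set.mem_insert_iff, Set.mem_singleton_iff] at haN
    rcases haN with h | h | h
    · exact absurd h hax1
    · exact Or.inl h
    · exact Or.inr h
  rcases ha' with h | h
  · have ha2 : G.Adj x1 x2 := h ▸ hadj1
    obtain ⟨b, hbN, hbx3, hadj3⟩ := hnb x3 hm3
    have hb' : b = x1 ∨ b = x2 := by
      rw [hNv] at hbN
      simp only [Set.mem_insert_iff, Set.mem_singleton_iff] at hbN
      rcases hbN with h' | h' | h'
      · exact Or.inl h'
      · exact Or.inr h'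
      · exact absurd h' hbx3
    rcases hb' with h' | h'
    · have hb1 : G.Adj x3 x1 := h' ▸ hadj3
      exact hdead x1 x2 x3 hm1 hm2 hm3 h23 ha2 hb1.symm
    · have hb2 : G.Adj x3 x2 := h' ▸ hadj3
      exact hdead x2 x1 x3 hm2 hm1 hm3 h13 ha2.symm hb2.symm
  · have ha3 : G.Adj x1 x3 := h ▸ hadj1
    obtain ⟨b, hbN, hbx2, hadj2⟩ := hnb x2 hm2
    have hb' : b = x1 ∨ b = x3 := by
      rw [hNv] at hbN
      simp only [Set.mem_insert_iff, Set.mem_singleton_iff] at hbN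
      rcases hbN with h' | h' | h'
      · exact Or.inl h'
      · exact absurd h' hbx2
      · exact Or.inr h'
    rcases hb' with h' | h'
    · have hb1 : G.Adj x2 x1 := h' ▸ hadj2
      exact hdead x1 x2 x3 hm1 hm2 hm3 h23 hb1.symm ha3
    · have hb3 : G.Adj x2 x3 := h' ▸ hadj2
      exact hdead x3 x1 x2 hm3 hm1 hm2 h12 ha3.symm hb3.symm

section Final

lemma internal_two_nbrs {Γ : SimpleGraph V} : ∀ {u v : V} (p : Γ.Walk u v), p.IsPath →
    ∀ w, w ∈ p.support → w ≠ u → w ≠ v → ∃ a b, a ≠ b ∧ Γ.Adj w a ∧ Γ.Adj w b := by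
  intro u v p
  induction p with
  | nil =>
    intro _ w hw hwu _
    rw [Walk.support_nil] at hw
    exact absurd (List.mem_singleton.1 hw) hwu
  | @cons x y z h q ih =>
    intro hp w hw hwu hwv
    rw [Walk.support_cons] at hw
    rcases List.mem_cons.1 hw with rfl | hw2
    · exact absurd rfl hwu
    · by_cases hwy : w = y
      · subst hwy
        cases q with
        | nil => exact absurd rfl hwv
        | @cons y' c z' h2 q2 =>
          refine ⟨x, c, ?_, h.symm, h2⟩
          have hx : x ∉ (Walk.cons h2 q2).support := ((Walk.cons_isPath_iff h (Walk.cons h2 q2)).1 hp).2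
          intro hxc
          apply hx
          rw [Walk.support_cons]
          exact List.mem_cons_of_mem _ (hxc ▸ q2.start_mem_support)
      · exact ih ((Walk.cons_isPath_iff h q).1 hp).1 w hw2 hwy hwv

lemma internal_facts {Γ : SimpleGraph V} {u v : V} {p : Γ.Walk u v} (hp : p.IsPath)
    {w : V} (hw : w ∈ p.support.tail.dropLast) :
    w ∈ p.support ∧ w ≠ u ∧ w ≠ v := by
  have hnodup := hp.support_nodup
  have hcons := p.support_eq_cons
  have hwt : w ∈ p.support.tail := List.dropLast_subset _ hw
  have hwsup : w ∈ p.support := List.mem_of_mem_tail hwt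
  have htne : p.support.tail ≠ [] := by
    intro h
    rw [h] at hwt
    exact absurd hwt List.not_mem_nil
  have hwu : w ≠ u := by
    intro h
    rw [hcons, List.nodup_cons] at hnodup
    exact hnodup.1 (h ▸ hwt)
  obtain ⟨b, l, hbl⟩ := List.exists_cons_of_ne_nil htne
  have hsup2 : p.support = u :: b :: l := by rw [hcons, hbl]
  have hA : (u :: b :: l).getLast? = some v := by
    rw [← hsup2, List.getLast?_eq_getLast (by simp : p.support ≠ [])]
    exact congrArg some p.getLast_support
  have hBv : (b :: l).getLast (by simp) = v := by
    rw [List.getLast?_cons_cons, List.getLast?_eq_getLast (l := b :: l) (by simp)] at hA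
    exact Option.some_injective _ hA
  have happ := List.dropLast_append_getLast (l := b :: l) (by simp)
  rw [hBv] at happ
  have htnodup : ((b :: l).dropLast ++ [v]).Nodup := by
    rw [happ]
    rw [hsup2, List.nodup_cons] at hnodup
    exact hnodup.2
  rw [List.nodup_append] at htnodup
  have hwv : w ≠ v := by
    intro h
    have hw' : w ∈ (b :: l).dropLast := by rw [← hbl]; exact hw
    exact htnodup.2.2 w hw' w (by rw [h]; exact List.mem_singleton.2 rfl) rfl
  exact ⟨hwsup, hwu, hwv⟩

end Final

end RVCAux

theorem stmt_12 {V : Type*} [Fintype V] (G : SimpleGraph V) [DecidableRel G.Adj]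
    (hG : G.Connected) (hδ : G.minDegree = 3) :
    (rvc G : ℝ) ≤ 3 * (Fintype.card V : ℝ) / 4 - 2 := by
  classical
  have hδ3 : ∀ v : V, 3 ≤ (G.neighborSet v).ncard := by
    intro v
    have h1 := G.minDegree_le_degree v
    rw [hδ] at h1
    have h2 : (G.neighborSet v).ncard = G.degree v := by
      rw [← SimpleGraph.card_neighborSet_eq_degree, ← Nat.card_coe_set_eq,
        Nat.card_eq_fintype_card]
    omega
  obtain ⟨H, hc, hu, hl⟩ := RVCAux.main_leaves hG hδ3
  set I : Set V := Set.univ \ RVCAux.lvs H with hI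
  haveI : Fintype I := (Set.toFinite I).fintype
  have hcardI : Fintype.card I = I.ncard := by
    rw [Set.ncard_eq_toFinset_card' I, Set.toFinset_card]
  set e := Fintype.equivFin I with he
  set k := I.ncard with hk
  set c : V → ℕ := fun v => if h : v ∈ I then (e ⟨v, h⟩ : ℕ) else 0 with hcdef
  have hclt : ∀ w ∈ I, c w < k := by
    intro w hw
    rw [hcdef]
    simp only [dif_pos hw]
    rw [show k = Fintype.card I from hcardI.symm]
    exact (e ⟨w, hw⟩).is_lt
  have hcinj : ∀ a ∈ I, ∀ b ∈ I, c a = c b → a = b := by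
    intro a ha b hb hab
    rw [hcdef] at hab
    simp only [dif_pos ha, dif_pos hb] at hab
    have := e.injective (Fin.val_injective hab)
    exact congrArg Subtype.val this
  have hspan : H.IsSpanning := fun v => hu ▸ Set.mem_univ v
  obtain ⟨hcc⟩ := hc
  have hΓc : H.spanningCoe.Connected :=
    (Iso.connected_iff (SimpleGraph.Subgraph.spanningCoeEquivCoeOfSpanning H hspan)).2 hcc
  have hrainbow : IsRainbowVColoring G c k := by
    intro u v
    obtain ⟨p0⟩ := hΓc.preconnected u v
    set P := p0.toPath with hP
    have hPp : (P : H.spanningCoe.Walk u v).IsPath := P.2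
    have hedges : ∀ e ∈ (P : H.spanningCoe.Walk u v).edges, e ∈ G.edgeSet :=
      fun e he => (SimpleGraph.edgeSet_mono H.spanningCoe_le)
        ((P : H.spanningCoe.Walk u v).edges_subset_edgeSet he)
    set q := (P : H.spanningCoe.Walk u v).transfer G hedges with hq
    have hqp : q.IsPath := hPp.transfer hedges
    have hsupp : q.support = (P : H.spanningCoe.Walk u v).support :=
      Walk.support_transfer _ hedges
    have hintI : ∀ w ∈ q.support.tail.dropLast, w ∈ I := by
      intro w hw
      rw [hsupp] at hw
      obtain ⟨hwsup, hwu, hwv⟩ := RVCAux.internal_facts hPp hw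
      obtain ⟨a, b, hab, ha, hb⟩ := RVCAux.internal_two_nbrs _ hPp w hwsup hwu hwv
      have ha' : H.Adj w a := ha
      have hb' : H.Adj w b := hb
      refine ⟨Set.mem_univ _, ?_⟩
      rintro ⟨-, hdg⟩
      have h2 : 1 < RVCAux.dg H w :=
        (Set.one_lt_ncard (Set.toFinite _)).2 ⟨a, ha', b, hb', hab⟩
      omega
    refine ⟨q, hqp, ?_, fun w hw => hclt w (hintI w hw)⟩
    have hnd : q.support.tail.dropLast.Nodup :=
      ((List.dropLast_sublist _).trans (List.tail_sublist _)).nodup hqp.support_nodup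
    exact List.Nodup.map_on
      (fun x hx y hy hxy => hcinj x (hintI x hx) y (hintI y hy) hxy) hnd
  have hrvc_le : rvc G ≤ k := Nat.sInf_le ⟨c, hrainbow⟩
  have hln : (RVCAux.lvs H).ncard ≤ Fintype.card V := by
    have := Set.ncard_le_ncard (Set.subset_univ (RVCAux.lvs H)) (Set.toFinite _)
    rwa [Set.ncard_univ, Nat.card_eq_fintype_card] at this
  have hkeq : k + (RVCAux.lvs H).ncard = Fintype.card V := by
    rw [hk, hI, Set.ncard_diff (Set.subset_univ _) (Set.toFinite _), Set.ncard_univ,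
      Nat.card_eq_fintype_card]
    omega
  have h8 : (Fintype.card V : ℝ) + 8 ≤ 4 * ((RVCAux.lvs H).ncard : ℝ) := by
    exact_mod_cast hl
  have hkR : (k : ℝ) + ((RVCAux.lvs H).ncard : ℝ) = (Fintype.card V : ℝ) := by
    exact_mod_cast hkeq
  have hrv : (rvc G : ℝ) ≤ (k : ℝ) := by exact_mod_cast hrvc_le
  linarith
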